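/- Let ξ > 0 and let F be a distribution function with r(F) = ∞. Then F ∈ D_p(L_{1,ξ}) (with standardized parameters μ = 0, σ = 1) if and only if for every x > 0 with 1 + ξ log x > 0, lim_{t→∞} F̄(x^{tξ} e^t)/F̄(e^t) = (1 + ξ log x)^{−1/ξ}. -/

import Mathlib

open MeasureTheory Filter Real Set

/-- A (cumulative) distribution function on `ℝ`. -/
structure IsDF (F : ℝ → ℝ) : Prop where
  mono : Monotone F
  right_cont : ∀ x : ℝ, ContinuousWithinAt F (Set.Ici x) x
  tendsto_bot : Tendsto F atBot (nhds 0)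
  tendsto_top : Tendsto F atTop (nhds 1)

/-- `F` belongs to the p-max domain of attraction of `K`: there are norming
sequences `δ n > 0`, `β n > 0` with `F^n (δ_n |x|^{β_n} sign x) → K x` at every
continuity point `x` of `K`. -/
def DpDomain (F K : ℝ → ℝ) : Prop :=
  ∃ δ β : ℕ → ℝ, (∀ n, 0 < δ n) ∧ (∀ n, 0 < β n) ∧
    ∀ x : ℝ, ContinuousAt K x →
      Tendsto (fun n : ℕ => (F (δ n * |x| ^ β n * Real.sign x)) ^ n) atTop (nhds (K x))

/-- The log-GEV distribution function `L_{1,ξ}(x; μ, σ)` (positive support). -/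
noncomputable def L1 (ξ μ σ x : ℝ) : ℝ :=
  if 0 < x then
    if 0 < 1 + (ξ / σ) * Real.log (Real.exp (-μ) * x) then
      Real.exp (-(1 + (ξ / σ) * Real.log (Real.exp (-μ) * x)) ^ (-1 / ξ))
    else if 0 < ξ then 0 else 1
  else 0

/-- The negative log-GEV distribution function `L_{2,ξ}(x; μ, σ)` (negative support). -/
noncomputable def L2 (ξ μ σ x : ℝ) : ℝ :=
  if x < 0 then
    if 0 < 1 - (ξ / σ) * Real.log (Real.exp (-μ) * |x|) then
      Real.exp (-(1 - (ξ / σ) * Real.log (Real.exp (-μ) * |x|)) ^ (-1 / ξ))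
    else if 0 < ξ then 0 else 1
  else 1


lemma slope_log_tendsto : Tendsto (fun g : ℝ => Real.log g / (g - 1)) (nhdsWithin 1 {(1:ℝ)}ᶜ) (nhds 1) := by
  have h2 := hasDerivAt_iff_tendsto_slope.mp (Real.hasDerivAt_log one_ne_zero)
  rw [inv_one] at h2
  have : (fun g : ℝ => Real.log g / (g - 1)) = slope Real.log 1 := by
    funext g; rw [slope_def_field, Real.log_one, sub_zero]
  rw [this]; exact h2

lemma tendsto_natCast_inv : Tendsto (fun n : ℕ => ((n:ℝ))⁻¹) atTop (nhds 0) :=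
  tendsto_inv_atTop_zero.comp tendsto_natCast_atTop_atTop

/-- If `n * x n → l` and `x n > 0` then `(1 - x n)^n → exp (-l)`. -/
lemma tendsto_pow_of_tendsto_mul (x : ℕ → ℝ) (l : ℝ)
    (hpos : ∀ n, 0 < x n) (h : Tendsto (fun n : ℕ => (n : ℝ) * x n) atTop (nhds l)) :
    Tendsto (fun n : ℕ => (1 - x n) ^ n) atTop (nhds (Real.exp (-l))) := by
  have hx0 : Tendsto x atTop (nhds 0) := by
    have h1 : Tendsto (fun n : ℕ => ((n:ℝ) * x n) * (n:ℝ)⁻¹) atTop (nhds (l * 0)) :=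
      h.mul tendsto_natCast_inv
    rw [mul_zero] at h1
    apply h1.congr'
    filter_upwards [eventually_ge_atTop 1] with n hn
    have : (n:ℝ) ≠ 0 := by positivity
    field_simp
  -- slope at g n = 1 - x n
  have hne : ∀ᶠ n in atTop, (1 : ℝ) - x n ∈ ({(1:ℝ)}ᶜ : Set ℝ) := by
    filter_upwards [eventually_ge_atTop 0] with n _
    simp only [Set.mem_compl_iff, Set.mem_singleton_iff]
    intro hc
    have := hpos n; nlinarith
  have hg1 : Tendsto (fun n => (1:ℝ) - x n) atTop (nhds 1) := by
    simpa using tendsto_const_nhds.sub hx0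
  have hgin : Tendsto (fun n => (1:ℝ) - x n) atTop (nhdsWithin 1 {(1:ℝ)}ᶜ) :=
    tendsto_nhdsWithin_iff.mpr ⟨hg1, hne⟩
  have hslope : Tendsto (fun n => Real.log (1 - x n) / ((1 - x n) - 1)) atTop (nhds 1) :=
    slope_log_tendsto.comp hgin
  -- n * log (1 - x n) = (n * x n) * (log(1-x n)/((1-x n)-1)) * (-1)
  have hlog : Tendsto (fun n : ℕ => (n : ℝ) * Real.log (1 - x n)) atTop (nhds (-l)) := by
    have h2 : Tendsto (fun n : ℕ => ((n:ℝ) * x n) * (Real.log (1 - x n) / ((1 - x n) - 1)) * (-1))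
        atTop (nhds (l * 1 * (-1))) := (h.mul hslope).mul tendsto_const_nhds
    rw [mul_one, mul_neg_one] at h2
    apply h2.congr
    intro n
    have hx := (hpos n).ne'
    have : (1:ℝ) - x n - 1 = -x n := by ring
    rw [this]
    field_simp
  have hfin : Tendsto (fun n : ℕ => Real.exp ((n : ℝ) * Real.log (1 - x n))) atTop
      (nhds (Real.exp (-l))) := (Real.continuous_exp.tendsto _).comp hlog
  apply hfin.congr'
  filter_upwards [hx0.eventually (eventually_lt_nhds one_pos)] with n hn
  have hp : (0:ℝ) < 1 - x n := by linarith
  rw [← Real.log_pow, Real.exp_log (by positivity)]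
/-- If `0 ≤ g n < 1` and `g n ^ n → exp (-l)` with `l > 0` then `n * (1 - g n) → l`. -/
lemma tendsto_mul_of_tendsto_pow (g : ℕ → ℝ) (l : ℝ) (hl : 0 < l)
    (h0 : ∀ n, 0 ≤ g n) (h1 : ∀ n, g n < 1)
    (h : Tendsto (fun n : ℕ => g n ^ n) atTop (nhds (Real.exp (-l)))) :
    Tendsto (fun n : ℕ => (n : ℝ) * (1 - g n)) atTop (nhds l) := by
  have hEpos : (0:ℝ) < Real.exp (-l) := Real.exp_pos _
  -- lower bound: eventually g n ^ n ≥ exp(-l)/2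
  have hev : ∀ᶠ n in atTop, Real.exp (-l) / 2 < g n ^ n :=
    h.eventually (eventually_gt_nhds (by linarith))
  -- g n → 1
  have hg1 : Tendsto g atTop (nhds 1) := by
    have hle : ∀ᶠ n : ℕ in atTop, Real.exp ((Real.log (Real.exp (-l) / 2)) / (n:ℝ)) ≤ g n := by
      filter_upwards [hev, eventually_ge_atTop 1] with n hn hn1
      have hnn : (0:ℝ) < n := by exact_mod_cast hn1
      have h2 : Real.exp ((Real.log (Real.exp (-l) / 2)) / (n:ℝ)) ^ n = Real.exp (Real.log (Real.exp (-l)/2)) := by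
        rw [← Real.exp_nat_mul]
        congr 1
        field_simp
      have h3 : Real.exp (Real.log (Real.exp (-l)/2)) = Real.exp (-l)/2 := Real.exp_log (by positivity)
      -- so exp(c/n)^n = exp(-l)/2 < g n ^ n, both bases nonneg ⇒ base ineq
      by_contra hcon
      push_neg at hcon
      have : g n ^ n ≤ Real.exp ((Real.log (Real.exp (-l) / 2)) / (n:ℝ)) ^ n :=
        pow_le_pow_left₀ (h0 n) hcon.le n
      rw [h2, h3] at this
      linarith
    have hlb : Tendsto (fun n : ℕ => Real.exp ((Real.log (Real.exp (-l) / 2)) / (n:ℝ))) atTop (nhds 1) := by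
      have hd : Tendsto (fun n : ℕ => (Real.log (Real.exp (-l)/2)) / (n:ℝ)) atTop (nhds 0) :=
        Tendsto.div_atTop tendsto_const_nhds tendsto_natCast_atTop_atTop
      have he := (Real.continuous_exp.tendsto 0).comp hd
      simpa [Function.comp_def] using he
    apply tendsto_of_tendsto_of_tendsto_of_le_of_le' hlb tendsto_const_nhds hle
    · filter_upwards with n; exact (h1 n).le
  -- log of hypothesis
  have hgne : ∀ᶠ n in atTop, g n ∈ ({(1:ℝ)}ᶜ : Set ℝ) := by
    filter_upwards with n; exact (h1 n).ne
  have hslope : Tendsto (fun n => Real.log (g n) / (g n - 1)) atTop (nhds 1) :=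
    slope_log_tendsto.comp (tendsto_nhdsWithin_iff.mpr ⟨hg1, hgne⟩)
  have hgpos : ∀ᶠ n in atTop, 0 < g n := hg1.eventually (eventually_gt_nhds one_pos)
  have hlog : Tendsto (fun n : ℕ => (n:ℝ) * Real.log (g n)) atTop (nhds (-l)) := by
    have := (Real.continuousAt_log hEpos.ne').tendsto.comp h
    rw [Real.log_exp] at this
    apply this.congr
    intro n; simp [Real.log_pow]
  -- n (1 - g n) = - (n log g n) / slope
  have hne : ∀ᶠ n in atTop, Real.log (g n) / (g n - 1) ≠ 0 :=
    hslope.eventually (eventually_ne_nhds one_ne_zero)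
  have hdiv : Tendsto (fun n : ℕ => (-((n:ℝ) * Real.log (g n))) / (Real.log (g n) / (g n - 1)))
      atTop (nhds l) := by
    have := (hlog.neg).div hslope one_ne_zero
    simpa [Pi.div_def] using this
  apply hdiv.congr'
  filter_upwards [hne] with n hn
  have hgn1 : g n - 1 ≠ 0 := sub_ne_zero.mpr (h1 n).ne
  have hlg : Real.log (g n) ≠ 0 := by
    intro hz; exact hn (by simp [hz])
  field_simp
  ring

lemma F_lt_one (F : ℝ → ℝ) (hmono : Monotone F) (hr : ¬ BddAbove {x : ℝ | F x < 1}) (x : ℝ) :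
    F x < 1 := by
  by_contra hc
  push_neg at hc
  apply hr
  refine ⟨x, fun y hy => ?_⟩
  by_contra hxy
  push_neg at hxy
  exact absurd (lt_of_le_of_lt (hc.trans (hmono hxy.le)) hy) (lt_irrefl _)

lemma F_nonneg (F : ℝ → ℝ) (hF : IsDF F) (x : ℝ) : 0 ≤ F x := by
  refine le_of_tendsto hF.tendsto_bot ?_
  filter_upwards [eventually_le_atBot x] with y hy
  exact hF.mono hy

lemma L1_eval (ξ x : ℝ) (hx : 0 < x) (hy : 0 < 1 + ξ * Real.log x) :
    L1 ξ 0 1 x = Real.exp (-(1 + ξ * Real.log x) ^ (-1 / ξ)) := by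
  simp only [L1, neg_zero, Real.exp_zero, one_mul, div_one, if_pos hx, if_pos hy]

lemma L1_eval_zero (ξ x : ℝ) (hξ : 0 < ξ) (hx : 0 < x) (hy : ¬ 0 < 1 + ξ * Real.log x) :
    L1 ξ 0 1 x = 0 := by
  simp only [L1, neg_zero, Real.exp_zero, one_mul, div_one, if_pos hx, if_neg hy, if_pos hξ]

lemma L1_eval_neg (ξ x : ℝ) (hx : ¬ 0 < x) : L1 ξ 0 1 x = 0 := by
  simp only [L1, if_neg hx]

lemma seq_norming (ξ : ℝ) (hξ : 0 < ξ) (T : ℝ → ℝ)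
    (hpos : ∀ t, 0 < T t) (hanti : Antitone T)
    (htop : Tendsto T atTop (nhds 0))
    (hRV : ∀ y : ℝ, 0 < y → Tendsto (fun t : ℝ => T (t * y) / T t) atTop (nhds (y ^ (-1/ξ)))) :
    ∃ a : ℕ → ℝ, (∀ n, 1 ≤ a n) ∧ Tendsto a atTop atTop ∧
      ∀ y : ℝ, 0 < y → Tendsto (fun n : ℕ => (n : ℝ) * T (a n * y)) atTop
        (nhds (y ^ (-1/ξ))) := by
  classical
  set A : ℕ → Set ℝ := fun n => {t | 1/(n:ℝ) ≤ T t} with hA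
  set a0 : ℕ → ℝ := fun n => sSup (A n) with ha0
  set a : ℕ → ℝ := fun n => max 1 (a0 n) with ha
  have hmem : ∀ M : ℝ, ∀ᶠ n : ℕ in atTop, M ∈ A n := by
    intro M
    filter_upwards [tendsto_one_div_atTop_nhds_zero_nat.eventually
      (eventually_lt_nhds (hpos M))] with n hn
    exact hn.le
  have hbdd : ∀ n : ℕ, 1 ≤ n → BddAbove (A n) := by
    intro n hn
    have hn0 : (0:ℝ) < 1/(n:ℝ) := by
      apply one_div_pos.mpr; exact_mod_cast hn
    rcases (htop.eventually (eventually_lt_nhds hn0)).exists_forall_of_atTop with ⟨t1, ht1⟩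
    refine ⟨t1, fun s hs => ?_⟩
    by_contra hst
    push_neg at hst
    exact absurd hs (not_le.mpr (ht1 s hst.le))
  have hage : ∀ M : ℝ, ∀ᶠ n : ℕ in atTop, M ≤ a0 n := by
    intro M
    filter_upwards [hmem M, eventually_ge_atTop 1] with n hn hn1
    exact le_csSup (hbdd n hn1) hn
  have haa0 : ∀ᶠ n : ℕ in atTop, a n = a0 n := by
    filter_upwards [hage 1] with n hn
    exact max_eq_right hn
  have hta : Tendsto a atTop atTop := by
    rw [tendsto_atTop]
    intro M
    filter_upwards [hage M] with n hn
    exact hn.trans (le_max_right _ _)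
  have hTub : ∀ᶠ n : ℕ in atTop, ∀ s, a0 n < s → T s < 1/(n:ℝ) := by
    filter_upwards [eventually_ge_atTop 1] with n hn1
    intro s hs
    by_contra hcon
    push_neg at hcon
    exact absurd (le_csSup (hbdd n hn1) hcon) (not_le.mpr hs)
  have hTlb : ∀ᶠ n : ℕ in atTop, 1/(n:ℝ) ≤ T (a0 n - 1) := by
    filter_upwards [hmem 0] with n hn
    obtain ⟨s, hsA, hs⟩ := exists_lt_of_lt_csSup ⟨0, hn⟩ (show a0 n - 1 < a0 n by linarith)
    exact le_trans hsA (hanti hs.le)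
  refine ⟨a, fun n => le_max_left _ _, hta, ?_⟩
  intro y hy
  rw [tendsto_order]
  constructor
  · -- lower bound side
    intro c hc
    have hcont : ContinuousAt (fun u : ℝ => (y/u) ^ (-1/ξ)) 1 := by
      apply ContinuousAt.rpow_const (continuousAt_const.div continuousAt_id one_ne_zero)
      left; simp [hy.ne']
    have hval : (fun u : ℝ => (y/u) ^ (-1/ξ)) 1 = y ^ (-1/ξ) := by norm_num
    have hev : ∀ᶠ u in nhds (1:ℝ), c < (y/u) ^ (-1/ξ) ∧ 0 < u := by
      refine (hcont.eventually_const_lt ?_).and (eventually_gt_nhds one_pos)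
      rw [hval]; exact hc
    have hev2 : ∀ᶠ u in nhdsWithin (1:ℝ) (Iio 1),
        (c < (y/u) ^ (-1/ξ) ∧ 0 < u) ∧ u ∈ Iio (1:ℝ) :=
      (hev.filter_mono nhdsWithin_le_nhds).and self_mem_nhdsWithin
    obtain ⟨u, ⟨hcu, hu0⟩, hu1⟩ := hev2.exists
    have hu1' : u < 1 := hu1
    have hmul : Tendsto (fun n : ℕ => a n * u) atTop atTop := hta.atTop_mul_const hu0
    have hratio : Tendsto (fun n : ℕ => T (a n * y) / T (a n * u)) atTop
        (nhds ((y/u) ^ (-1/ξ))) := by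
      have h2 := (hRV (y/u) (by positivity)).comp hmul
      apply h2.congr
      intro n
      simp only [Function.comp_apply]
      congr 2
      field_simp
    have hlb1 : ∀ᶠ n : ℕ in atTop, 1 ≤ (n:ℝ) * T (a n * u) := by
      filter_upwards [hTlb, haa0, hage (1/(1-u) + 1), eventually_ge_atTop 1]
        with n h1 h2 h3 h4
      have h1u : 0 < 1 - u := by linarith
      have key : 1 ≤ a0 n * (1 - u) := by
        have h5 := mul_le_mul_of_nonneg_right (show 1/(1-u) ≤ a0 n by linarith) h1u.le
        rwa [one_div_mul_cancel h1u.ne'] at h5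
      have h6 : a n * u ≤ a0 n - 1 := by rw [h2]; nlinarith
      have h7 : T (a0 n - 1) ≤ T (a n * u) := hanti h6
      have h8 : 1/(n:ℝ) ≤ T (a n * u) := h1.trans h7
      have hn0 : (0:ℝ) < (n:ℝ) := by exact_mod_cast h4
      calc (1:ℝ) = (n:ℝ) * (1/(n:ℝ)) := by field_simp
        _ ≤ (n:ℝ) * T (a n * u) := by
            exact mul_le_mul_of_nonneg_left h8 hn0.le
    have hc2 : ∀ᶠ n : ℕ in atTop, c < T (a n * y) / T (a n * u) :=
      hratio.eventually (eventually_gt_nhds hcu)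
    filter_upwards [hlb1, hc2] with n h5 h6
    have hTu := hpos (a n * u)
    have hTy := hpos (a n * y)
    calc c < T (a n * y) / T (a n * u) := h6
      _ ≤ ((n:ℝ) * T (a n * u)) * (T (a n * y) / T (a n * u)) :=
          le_mul_of_one_le_left (by positivity) h5
      _ = (n:ℝ) * T (a n * y) := by field_simp
  · -- upper bound side
    intro c hc
    have hcont : ContinuousAt (fun v : ℝ => (y/v) ^ (-1/ξ)) 1 := by
      apply ContinuousAt.rpow_const (continuousAt_const.div continuousAt_id one_ne_zero)
      left; simp [hy.ne']
    have hval : (fun v : ℝ => (y/v) ^ (-1/ξ)) 1 = y ^ (-1/ξ) := by norm_num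
    have hev : ∀ᶠ v in nhds (1:ℝ), (y/v) ^ (-1/ξ) < c := by
      refine hcont.eventually_lt_const ?_
      rw [hval]; exact hc
    have hev2 : ∀ᶠ v in nhdsWithin (1:ℝ) (Ioi 1),
        ((y/v) ^ (-1/ξ) < c) ∧ v ∈ Ioi (1:ℝ) :=
      (hev.filter_mono nhdsWithin_le_nhds).and self_mem_nhdsWithin
    obtain ⟨v, hcv, hv1⟩ := hev2.exists
    have hv1' : (1:ℝ) < v := hv1
    have hv0 : (0:ℝ) < v := by linarith
    have hmul : Tendsto (fun n : ℕ => a n * v) atTop atTop := hta.atTop_mul_const hv0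
    have hratio : Tendsto (fun n : ℕ => T (a n * y) / T (a n * v)) atTop
        (nhds ((y/v) ^ (-1/ξ))) := by
      have h2 := (hRV (y/v) (by positivity)).comp hmul
      apply h2.congr
      intro n
      simp only [Function.comp_apply]
      congr 2
      field_simp
    have hub1 : ∀ᶠ n : ℕ in atTop, (n:ℝ) * T (a n * v) ≤ 1 := by
      filter_upwards [hTub, haa0, hage (1/(v-1) + 1), eventually_ge_atTop 1]
        with n h1 h2 h3 h4
      have h1v : 0 < v - 1 := by linarith
      have key : 1 ≤ a0 n * (v - 1) := by
        have h5 := mul_le_mul_of_nonneg_right (show 1/(v-1) ≤ a0 n by linarith) h1v.le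
        rwa [one_div_mul_cancel h1v.ne'] at h5
      have h6 : a0 n < a n * v := by rw [h2]; nlinarith
      have h7 : T (a n * v) < 1/(n:ℝ) := h1 _ h6
      have hn0 : (0:ℝ) < (n:ℝ) := by exact_mod_cast h4
      calc (n:ℝ) * T (a n * v) ≤ (n:ℝ) * (1/(n:ℝ)) :=
            mul_le_mul_of_nonneg_left h7.le hn0.le
        _ = 1 := by field_simp
    have hc2 : ∀ᶠ n : ℕ in atTop, T (a n * y) / T (a n * v) < c :=
      hratio.eventually (eventually_lt_nhds hcv)
    filter_upwards [hub1, hc2] with n h5 h6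
    have hTv := hpos (a n * v)
    calc (n:ℝ) * T (a n * y)
        = ((n:ℝ) * T (a n * v)) * (T (a n * y) / T (a n * v)) := by field_simp
      _ ≤ T (a n * y) / T (a n * v) := mul_le_of_le_one_left (div_nonneg (hpos _).le (hpos _).le) h5
      _ < c := h6

lemma rho_tendsto_zero (ρ d aa : ℕ → ℝ) (k : ℕ → ℕ) (μ : ℝ)
    (hk : ∀ n, 1 ≤ n → k n < n) (hkt : Tendsto k atTop atTop)
    (hrec : ∀ n, 1 ≤ n → ρ n = aa n * ρ (k n) - d n)
    (haa : Tendsto aa atTop (nhds μ)) (hμ : |μ| < 1)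
    (hd : Tendsto d atTop (nhds 0)) :
    Tendsto ρ atTop (nhds 0) := by
  set μ' : ℝ := (|μ| + 1) / 2 with hμ'def
  have hμ'0 : 0 ≤ μ' := by have := abs_nonneg μ; simp only [hμ'def]; linarith
  have hμ'1 : μ' < 1 := by simp only [hμ'def]; linarith
  have hμμ' : |μ| < μ' := by simp only [hμ'def]; linarith
  have haev : ∀ᶠ n in atTop, |aa n| ≤ μ' := by
    have h1 : Tendsto (fun n => |aa n|) atTop (nhds |μ|) := haa.abs
    exact (h1.eventually (eventually_le_nhds hμμ')).mono (fun n h => h)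
  have hsub : 0 < 1 - μ' := by linarith
  have hdabs : Tendsto (fun n => |d n|) atTop (nhds 0) := by simpa using hd.abs
  -- Step 1 : boundedness
  have hbound : ∃ C : ℝ, 0 ≤ C ∧ ∀ n, |ρ n| ≤ C := by
    obtain ⟨N, hN⟩ := eventually_atTop.mp (haev.and (hdabs.eventually (eventually_le_nhds one_pos)))
    set M : ℝ := (Finset.range (N + 1)).sup' (by simp) (fun j => |ρ j|) with hM
    set C : ℝ := max M (1 / (1 - μ') + 1) with hC
    have hC0 : 0 ≤ C := by
      have : (0:ℝ) ≤ 1 / (1 - μ') + 1 := by positivity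
      exact this.trans (le_max_right _ _)
    refine ⟨C, hC0, fun n => ?_⟩
    induction n using Nat.strong_induction_on with
    | _ n ih =>
      by_cases hn : n ≤ N
      · exact le_trans (Finset.le_sup' (fun j => |ρ j|) (Finset.mem_range.mpr (by omega)))
          (le_max_left _ _)
      · push_neg at hn
        have hn1 : 1 ≤ n := by omega
        obtain ⟨ha, hd1⟩ := hN n (by omega)
        have hkn := ih (k n) (hk n hn1)
        rw [hrec n hn1]
        calc |aa n * ρ (k n) - d n| ≤ |aa n * ρ (k n)| + |d n| := abs_sub _ _
          _ = |aa n| * |ρ (k n)| + |d n| := by rw [abs_mul]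
          _ ≤ μ' * C + 1 := by gcongr
          _ ≤ C := by
              have h2 : 1 / (1 - μ') + 1 ≤ C := le_max_right _ _
              have h3 : (1/(1-μ')) * (1-μ') ≤ C * (1-μ') :=
                mul_le_mul_of_nonneg_right (by linarith) hsub.le
              rw [one_div_mul_cancel hsub.ne'] at h3
              nlinarith
  obtain ⟨C, hC0, hCb⟩ := hbound
  -- Step 2 : iterated bound
  have hstep : ∀ ε : ℝ, 0 < ε → ∀ j : ℕ, ∀ᶠ n in atTop, |ρ n| ≤ μ' ^ j * C + ε / (1 - μ') := by
    intro ε hε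
    intro j
    induction j with
    | zero =>
      filter_upwards with n
      have : (0:ℝ) ≤ ε / (1 - μ') := by positivity
      simpa using (hCb n).trans (by linarith)
    | succ j ihj =>
      have hkev : ∀ᶠ n in atTop, |ρ (k n)| ≤ μ' ^ j * C + ε / (1 - μ') := hkt.eventually ihj
      filter_upwards [hkev, haev, hdabs.eventually (eventually_le_nhds hε),
        eventually_ge_atTop 1] with n h1 h2 h3 h4
      rw [hrec n h4]
      calc |aa n * ρ (k n) - d n| ≤ |aa n| * |ρ (k n)| + |d n| := by
            rw [← abs_mul]; exact abs_sub _ _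
        _ ≤ μ' * (μ' ^ j * C + ε / (1 - μ')) + ε := by gcongr
        _ = μ' ^ (j+1) * C + (μ' * (ε / (1 - μ')) + ε) := by ring
        _ ≤ μ' ^ (j+1) * C + ε / (1 - μ') := by
            have : μ' * (ε / (1 - μ')) + ε = ε / (1 - μ') := by field_simp; ring
            linarith [this.le]
  -- Step 3 : conclude
  rw [Metric.tendsto_atTop]
  intro ε0 hε0
  have hpowlim : Tendsto (fun j : ℕ => μ' ^ j * C) atTop (nhds 0) := by
    have := (tendsto_pow_atTop_nhds_zero_of_lt_one hμ'0 hμ'1).mul_const C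
    simpa using this
  obtain ⟨j, hj⟩ := (hpowlim.eventually (eventually_lt_nhds (half_pos hε0))).exists
  have hε' : 0 < ε0 * (1 - μ') / 4 := by positivity
  obtain ⟨Nf, hNf⟩ := eventually_atTop.mp (hstep _ hε' j)
  refine ⟨Nf, fun n hn => ?_⟩
  rw [Real.dist_eq, sub_zero]
  have h5 := hNf n hn
  have h6 : ε0 * (1 - μ') / 4 / (1 - μ') = ε0 / 4 := by field_simp
  rw [h6] at h5
  calc |ρ n| ≤ μ' ^ j * C + ε0 / 4 := h5
    _ < ε0 / 2 + ε0 / 4 := by linarith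
    _ < ε0 := by linarith

lemma backward (ξ : ℝ) (F : ℝ → ℝ) (hξ : 0 < ξ) (hF : IsDF F)
    (hr : ¬ BddAbove {x : ℝ | F x < 1})
    (hRV : ∀ y : ℝ, 0 < y →
      Tendsto (fun t : ℝ => (1 - F (Real.exp (t * y))) / (1 - F (Real.exp t)))
        atTop (nhds (y ^ (-1/ξ)))) :
    DpDomain F (L1 ξ 0 1) := by
  set T : ℝ → ℝ := fun t => 1 - F (Real.exp t) with hTdef
  have hpos : ∀ t, 0 < T t := by
    intro t
    have := F_lt_one F hF.mono hr (Real.exp t)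
    simp only [hTdef]
    linarith
  have hanti : Antitone T := by
    intro s t hst
    simp only [hTdef]
    have := hF.mono (Real.exp_le_exp.mpr hst)
    linarith
  have htop : Tendsto T atTop (nhds 0) := by
    have h1 := hF.tendsto_top.comp Real.tendsto_exp_atTop
    have h2 := (tendsto_const_nhds (x := (1:ℝ)) (f := (atTop : Filter ℝ))).sub h1
    simpa using h2
  obtain ⟨a, ha1, hta, hkey⟩ := seq_norming ξ hξ T hpos hanti htop hRV
  have ha0 : ∀ n, (0:ℝ) < a n := fun n => lt_of_lt_of_le one_pos (ha1 n)
  refine ⟨fun n => Real.exp (a n), fun n => ξ * a n, fun n => Real.exp_pos _,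
    fun n => by have := ha0 n; positivity, ?_⟩
  intro x _
  -- auxiliary squeeze
  have haux : ∀ (w : ℕ → ℝ) (K : ℝ), 0 ≤ K → K < 1 → (∀ n, F (w n) ≤ K) →
      Tendsto (fun n : ℕ => F (w n) ^ n) atTop (nhds 0) := by
    intro w K hK0 hK1 hb
    exact squeeze_zero (fun n => pow_nonneg (F_nonneg F hF (w n)) n)
      (fun n => pow_le_pow_left₀ (F_nonneg F hF (w n)) (hb n) n)
      (tendsto_pow_atTop_nhds_zero_of_lt_one hK0 hK1)
  rcases lt_trichotomy 0 x with hx | hx | hx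
  · -- x > 0
    have harg : ∀ n, Real.exp (a n) * |x| ^ (ξ * a n) * Real.sign x
        = Real.exp (a n * (1 + ξ * Real.log x)) := by
      intro n
      rw [Real.sign_of_pos hx, mul_one, abs_of_pos hx, Real.rpow_def_of_pos hx,
        ← Real.exp_add]
      congr 1
      ring
    by_cases hy : 0 < 1 + ξ * Real.log x
    · rw [L1_eval ξ x hx hy]
      have h1 := tendsto_pow_of_tendsto_mul (fun n => T (a n * (1 + ξ * Real.log x)))
        ((1 + ξ * Real.log x) ^ (-1/ξ)) (fun n => hpos _) (hkey _ hy)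
      apply h1.congr
      intro n
      rw [harg n]
      congr 1
      simp [hTdef]
    · rw [L1_eval_zero ξ x hξ hx hy]
      apply haux _ (F 1) (F_nonneg F hF 1) (F_lt_one F hF.mono hr 1)
      intro n
      rw [harg n]
      apply hF.mono
      push_neg at hy
      have h2 : a n * (1 + ξ * Real.log x) ≤ 0 :=
        mul_nonpos_of_nonneg_of_nonpos (ha0 n).le hy
      calc Real.exp (a n * (1 + ξ * Real.log x)) ≤ Real.exp 0 := Real.exp_le_exp.mpr h2
        _ = 1 := Real.exp_zero
  · -- x = 0
    subst hx  -- hx : 0 = x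
    rw [L1_eval_neg ξ 0 (lt_irrefl 0)]
    have : ∀ n : ℕ, Real.exp (a n) * |(0:ℝ)| ^ (ξ * a n) * Real.sign 0 = 0 := by
      intro n; simp [Real.sign_zero]
    apply (haux (fun _ => (0:ℝ)) (F 0) (F_nonneg F hF 0) (F_lt_one F hF.mono hr 0)
      (fun n => le_refl _)).congr
    intro n
    rw [this n]
  · -- x < 0
    rw [L1_eval_neg ξ x (by linarith)]
    apply haux _ (F 0) (F_nonneg F hF 0) (F_lt_one F hF.mono hr 0)
    intro n
    apply hF.mono
    rw [Real.sign_of_neg hx]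
    have h1 : (0:ℝ) ≤ Real.exp (a n) * |x| ^ (ξ * a n) := by positivity
    nlinarith

set_option maxHeartbeats 1000000 in
lemma rv_from_seq (ξ : ℝ) (hξ : 0 < ξ) (N : ℝ → ℝ)
    (hNmono : Monotone N) (hN1 : ∀ t, 1 ≤ N t)
    (hNtop : Tendsto N atTop atTop)
    (α c : ℕ → ℝ) (hα : ∀ n, 0 < α n)
    (hseq : ∀ y : ℝ, 0 < y →
      Tendsto (fun n : ℕ => N (α n * y + c n) / n) atTop (nhds (y ^ (1/ξ)))) :
    ∀ y : ℝ, 0 < y → Tendsto (fun t : ℝ => N (t * y) / N t) atTop (nhds (y ^ (1/ξ))) := by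
  classical
  set w0 : ℝ := N 0 with hw0
  set V : ℝ → ℝ := fun w => sInf {t | w ≤ N t} with hVdef
  have hVne : ∀ w : ℝ, {t | w ≤ N t}.Nonempty := by
    intro w
    obtain ⟨t, ht⟩ := (hNtop.eventually_ge_atTop w).exists
    exact ⟨t, ht⟩
  have hVbdd : ∀ w : ℝ, w0 < w → BddBelow {t | w ≤ N t} := by
    intro w hw
    refine ⟨0, fun t ht => ?_⟩
    by_contra hlt
    push_neg at hlt
    exact absurd (le_trans ht (hNmono hlt.le)) (not_le.mpr hw)
  have hV4 : ∀ w s, w0 < w → w ≤ N s → V w ≤ s := fun w s hw hs => csInf_le (hVbdd w hw) hs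
  have hV5 : ∀ w s, N s < w → s ≤ V w := by
    intro w s hs
    apply le_csInf (hVne w)
    intro t ht
    by_contra hlt
    push_neg at hlt
    exact absurd (le_trans ht (hNmono hlt.le)) (not_le.mpr hs)
  have hV6 : ∀ w s, w0 < w → s < V w → N s < w := by
    intro w s hw hlt
    by_contra hcon
    push_neg at hcon
    exact absurd (hV4 w s hw hcon) (not_le.mpr hlt)
  have hV7 : ∀ w s, V w < s → w ≤ N s := by
    intro w s hlt
    by_contra hcon
    push_neg at hcon
    exact absurd (hV5 w s hcon) (not_le.mpr hlt)
  have hVmono : ∀ w w', w0 < w → w ≤ w' → V w ≤ V w' :=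
    fun w w' hw hww => csInf_le_csInf (hVbdd w hw) (hVne w') (fun t ht => le_trans hww ht)
  -- rpow helpers
  have hcan1 : ∀ z : ℝ, 0 ≤ z → (z ^ ξ) ^ (1/ξ) = z := by
    intro z hz
    rw [← Real.rpow_mul hz, mul_one_div_cancel hξ.ne', Real.rpow_one]
  have hcan2 : ∀ z : ℝ, 0 ≤ z → (z ^ (1/ξ)) ^ ξ = z := by
    intro z hz
    rw [← Real.rpow_mul hz, one_div_mul_cancel hξ.ne', Real.rpow_one]
  have haux1 : ∀ z q : ℝ, 0 ≤ z → z ^ ξ < q → z < q ^ (1/ξ) := by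
    intro z q hz h
    have := Real.rpow_lt_rpow (z := 1/ξ) (Real.rpow_nonneg hz ξ) h (by positivity)
    rwa [hcan1 z hz] at this
  have haux2 : ∀ z q : ℝ, 0 ≤ z → 0 ≤ q → q < z ^ ξ → q ^ (1/ξ) < z := by
    intro z q hz hq h
    have := Real.rpow_lt_rpow (z := 1/ξ) hq h (by positivity)
    rwa [hcan1 z hz] at this
  have hmono3 : ∀ a b : ℝ, 0 ≤ a → a < b → a ^ ξ < b ^ ξ :=
    fun a b ha hab => Real.rpow_lt_rpow ha hab hξ
  -- D4 : sequential limit for V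
  have hVseq : ∀ z : ℝ, 0 < z →
      Tendsto (fun n : ℕ => (V ((n:ℝ) * z) - c n) / α n) atTop (nhds (z ^ ξ)) := by
    intro z hz
    have hzξ : 0 < z ^ ξ := Real.rpow_pos_of_pos hz ξ
    have hnz : Tendsto (fun n : ℕ => (n:ℝ) * z) atTop atTop :=
      tendsto_natCast_atTop_atTop.atTop_mul_const hz
    rw [tendsto_order]
    constructor
    · -- q < z^ξ  :  eventually q < (V (n z) - c n)/α n
      intro q hq
      set q'' : ℝ := (max q (z ^ ξ / 2) + z ^ ξ) / 2 with hq''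
      have hq''0 : 0 < q'' := by
        have : 0 < z ^ ξ / 2 := by positivity
        have h1 := le_max_right q (z ^ ξ / 2)
        simp only [hq'']
        linarith
      have hq''lt : q'' < z ^ ξ := by
        have h1 : max q (z ^ ξ / 2) < z ^ ξ := by
          apply max_lt hq; linarith
        simp only [hq'']; linarith
      have hq''gt : q < q'' := by
        have h1 := le_max_left q (z ^ ξ / 2)
        simp only [hq'']; linarith
      have hy''z : q'' ^ (1/ξ) < z := haux2 z q'' hz.le hq''0.le hq''lt
      have hev1 : ∀ᶠ n : ℕ in atTop, N (α n * q'' + c n) / n < z :=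
        (hseq q'' hq''0).eventually (eventually_lt_nhds hy''z)
      filter_upwards [hev1, eventually_ge_atTop 1] with n h1 h2
      have hn0 : (0:ℝ) < (n:ℝ) := by exact_mod_cast h2
      have h3 : N (α n * q'' + c n) < (n:ℝ) * z := by
        have h4 := (div_lt_iff₀ hn0).mp h1
        linarith [h4]
      have h5 : α n * q'' + c n ≤ V ((n:ℝ) * z) := hV5 _ _ h3
      rw [lt_div_iff₀ (hα n)]
      nlinarith [hα n]
    · -- z^ξ < q : eventually (V (n z) - c n)/α n < q
      intro q hq
      set y' : ℝ := (z ^ ξ + q) / 2 with hy'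
      have hy'0 : 0 < y' := by simp only [hy']; linarith
      have hy'gt : z ^ ξ < y' := by simp only [hy']; linarith
      have hy'lt : y' < q := by simp only [hy']; linarith
      have hy'z : z < y' ^ (1/ξ) := haux1 z y' hz.le hy'gt
      have hev1 : ∀ᶠ n : ℕ in atTop, z < N (α n * y' + c n) / n :=
        (hseq y' hy'0).eventually (eventually_gt_nhds hy'z)
      filter_upwards [hev1, eventually_ge_atTop 1, hnz.eventually_gt_atTop w0]
        with n h1 h2 h6
      have hn0 : (0:ℝ) < (n:ℝ) := by exact_mod_cast h2
      have h3 : (n:ℝ) * z ≤ N (α n * y' + c n) := by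
        have h4 := (lt_div_iff₀ hn0).mp h1
        linarith [h4]
      have h5 : V ((n:ℝ) * z) ≤ α n * y' + c n := hV4 _ _ h6 h3
      rw [div_lt_iff₀ (hα n)]
      nlinarith [hα n]
  -- index comparison lemma
  have hIC : ∀ (k : ℕ → ℕ) (κ : ℝ), 0 < κ → Tendsto k atTop atTop →
      Tendsto (fun n : ℕ => ((k n : ℝ)) / n) atTop (nhds κ) →
      Tendsto (fun n : ℕ => α (k n) / α n) atTop (nhds (κ ^ ξ)) ∧
      Tendsto (fun n : ℕ => (c (k n) - c n) / α n) atTop (nhds 0) := by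
    intro k κ hκ hkt hkr
    have hstar : ∀ z : ℝ, 0 < z →
        Tendsto (fun n : ℕ => (V ((k n : ℝ) * z) - c n) / α n) atTop (nhds ((κ*z) ^ ξ)) := by
      intro z hz
      have hκz : 0 < κ * z := by positivity
      set L : ℝ := (κ*z) ^ ξ with hL
      have hL0 : 0 < L := Real.rpow_pos_of_pos hκz ξ
      rw [tendsto_order]
      constructor
      · intro q hq
        set q'' : ℝ := (max q (L/2) + L)/2 with hq''def
        have hq''0 : 0 < q'' := by
          have := le_max_right q (L/2); simp only [hq''def]; linarith
        have hq''L : q'' < L := by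
          have : max q (L/2) < L := max_lt hq (by linarith)
          simp only [hq''def]; linarith
        have hq''q : q < q'' := by
          have := le_max_left q (L/2); simp only [hq''def]; linarith
        set z'' : ℝ := q'' ^ (1/ξ) with hz''def
        have hz''0 : 0 < z'' := Real.rpow_pos_of_pos hq''0 _
        have hz''lt : z'' < κ * z := haux2 _ _ hκz.le hq''0.le (by rw [← hL]; exact hq''L)
        have hz''ξ : z'' ^ ξ = q'' := hcan2 q'' hq''0.le
        have hev2 : ∀ᶠ n : ℕ in atTop, z''/z < (k n : ℝ)/n :=
          hkr.eventually (eventually_gt_nhds (by rw [div_lt_iff₀ hz]; linarith))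
        have hev3 := ((tendsto_natCast_atTop_atTop).atTop_mul_const hz''0).eventually_gt_atTop w0
        have hev4 : ∀ᶠ n : ℕ in atTop, q < (V ((n:ℝ) * z'') - c n) / α n :=
          (hVseq z'' hz''0).eventually (eventually_gt_nhds (by rw [hz''ξ]; exact hq''q))
        filter_upwards [hev2, hev3, hev4, eventually_ge_atTop 1] with n h1 h2 h3 h4
        have hn0 : (0:ℝ) < (n:ℝ) := by exact_mod_cast h4
        have h5 : (n:ℝ) * z'' ≤ (k n : ℝ) * z := by
          rw [div_lt_div_iff₀ hz hn0] at h1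
          linarith
        have h6 : V ((n:ℝ)*z'') ≤ V ((k n : ℝ)*z) := hVmono _ _ h2 h5
        have h7 : (V ((n:ℝ) * z'') - c n) / α n ≤ (V ((k n : ℝ) * z) - c n) / α n :=
          (div_le_div_iff_of_pos_right (hα n)).mpr (by linarith)
        linarith
      · intro q hq
        have hq0 : 0 < q := lt_trans hL0 hq
        have hκzq : κ * z < q ^ (1/ξ) := haux1 _ _ hκz.le hq
        set z' : ℝ := (κ * z + q ^ (1/ξ))/2 with hz'def
        have hz'0 : 0 < z' := by simp only [hz'def]; linarith
        have hz'gt : κ * z < z' := by simp only [hz'def]; linarith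
        have hz'lt : z' < q ^ (1/ξ) := by simp only [hz'def]; linarith
        have hz'q : z' ^ ξ < q := by
          have := hmono3 z' (q ^ (1/ξ)) hz'0.le hz'lt
          rwa [hcan2 q hq0.le] at this
        have hev2 : ∀ᶠ n : ℕ in atTop, (k n : ℝ)/n < z'/z :=
          hkr.eventually (eventually_lt_nhds (by rw [lt_div_iff₀ hz]; linarith))
        have hev3 := (((tendsto_natCast_atTop_atTop).comp hkt).atTop_mul_const hz).eventually_gt_atTop w0
        have hev4 : ∀ᶠ n : ℕ in atTop, (V ((n:ℝ) * z') - c n) / α n < q :=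
          (hVseq z' hz'0).eventually (eventually_lt_nhds hz'q)
        filter_upwards [hev2, hev3, hev4, eventually_ge_atTop 1] with n h1 h2 h3 h4
        have hn0 : (0:ℝ) < (n:ℝ) := by exact_mod_cast h4
        have h5 : (k n : ℝ) * z ≤ (n:ℝ) * z' := by
          rw [div_lt_div_iff₀ hn0 hz] at h1
          linarith
        have h6 : V ((k n : ℝ)*z) ≤ V ((n:ℝ)*z') := hVmono _ _ h2 h5
        have h7 : (V ((k n : ℝ) * z) - c n) / α n ≤ (V ((n:ℝ) * z') - c n) / α n :=
          (div_le_div_iff_of_pos_right (hα n)).mpr (by linarith)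
        linarith
    have hu : Tendsto (fun n : ℕ => (V ((k n : ℝ) * 1) - c (k n)) / α (k n)) atTop (nhds 1) := by
      have h1 := (hVseq 1 one_pos).comp hkt
      rw [Real.one_rpow] at h1
      exact h1
    have hv : Tendsto (fun n : ℕ => (V ((k n : ℝ) * 2) - c (k n)) / α (k n)) atTop
        (nhds (2 ^ ξ)) := (hVseq 2 two_pos).comp hkt
    have hP := hstar 1 one_pos
    have hQ := hstar 2 two_pos
    have hidP : ∀ n, (V ((k n:ℝ)*1) - c n)/α n
        = (α (k n)/α n) * ((V ((k n:ℝ)*1) - c (k n))/α (k n)) + (c (k n) - c n)/α n := by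
      intro n
      have h1 := (hα n).ne'
      have h2 := (hα (k n)).ne'
      field_simp
      ring
    have hidQ : ∀ n, (V ((k n:ℝ)*2) - c n)/α n
        = (α (k n)/α n) * ((V ((k n:ℝ)*2) - c (k n))/α (k n)) + (c (k n) - c n)/α n := by
      intro n
      have h1 := (hα n).ne'
      have h2 := (hα (k n)).ne'
      field_simp
      ring
    have hdiff : Tendsto (fun n => (α (k n)/α n) *
        ((V ((k n:ℝ)*2) - c (k n))/α (k n) - (V ((k n:ℝ)*1) - c (k n))/α (k n)))
        atTop (nhds ((κ*2)^ξ - (κ*1)^ξ)) := by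
      have h1 := hQ.sub hP
      apply h1.congr
      intro n
      rw [hidQ n, hidP n]
      ring
    have hvu : Tendsto (fun n => (V ((k n:ℝ)*2) - c (k n))/α (k n)
        - (V ((k n:ℝ)*1) - c (k n))/α (k n)) atTop (nhds (2^ξ - 1)) := hv.sub hu
    have h2ξ : (1:ℝ) < 2 ^ ξ := by
      rw [show (1:ℝ) = (1:ℝ) ^ ξ from (Real.one_rpow ξ).symm]
      exact hmono3 1 2 zero_le_one one_lt_two
    have hdne : (2:ℝ)^ξ - 1 ≠ 0 := ne_of_gt (by linarith)
    have hA : Tendsto (fun n => α (k n)/α n) atTop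
        (nhds (((κ*2)^ξ - (κ*1)^ξ)/(2^ξ - 1))) := by
      have h1 := hdiff.div hvu hdne
      refine Filter.Tendsto.congr' ?_ h1
      filter_upwards [hvu.eventually (eventually_gt_nhds (show (0:ℝ) < 2^ξ - 1 by linarith))]
        with n hn
      simp only [Pi.div_apply]
      rw [mul_div_assoc, div_self hn.ne', mul_one]
    have hlimval : ((κ*2)^ξ - (κ*1)^ξ)/(2^ξ - 1) = κ ^ ξ := by
      rw [mul_one, mul_comm κ 2, Real.mul_rpow (by norm_num) hκ.le]
      field_simp
    rw [hlimval] at hA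
    refine ⟨hA, ?_⟩
    have hD := hP.sub (hA.mul hu)
    have hz0 : (κ*1:ℝ)^ξ - κ^ξ * 1 = 0 := by rw [mul_one, mul_one, sub_self]
    rw [hz0] at hD
    apply hD.congr
    intro n
    rw [hidP n]
    ring
  -- rho -> 0
  have hhalf : Tendsto (fun n : ℕ => n / 2) atTop atTop := by
    apply tendsto_atTop_atTop.mpr
    intro b
    exact ⟨2*b, fun n hn => by omega⟩
  have hcastdiv : Tendsto (fun n : ℕ => ((n/2 : ℕ) : ℝ) / (n:ℝ)) atTop (nhds (1/2)) := by
    have hmod : Tendsto (fun n : ℕ => ((n % 2 : ℕ) : ℝ)/(n:ℝ)) atTop (nhds 0) := by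
      refine squeeze_zero (g := fun n : ℕ => 1/(n:ℝ)) (fun n => by positivity) ?_
        tendsto_one_div_atTop_nhds_zero_nat
      intro n
      rcases Nat.eq_zero_or_pos n with h | h
      · simp [h]
      · have hc : (0:ℝ) < (n:ℝ) := by exact_mod_cast h
        refine (div_le_div_iff_of_pos_right hc).mpr ?_
        exact_mod_cast Nat.le_of_lt_succ (Nat.mod_lt n (by norm_num))
    have h2 : Tendsto (fun n : ℕ => (1 - ((n % 2 : ℕ) : ℝ)/(n:ℝ))/2) atTop
        (nhds ((1-0)/2)) := (tendsto_const_nhds.sub hmod).div_const 2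
    norm_num at h2
    apply h2.congr'
    filter_upwards [eventually_ge_atTop 1] with n hn
    have hn0 : ((n:ℝ)) ≠ 0 := Nat.cast_ne_zero.mpr (by omega)
    have h3 : 2 * (n/2) + n % 2 = n := Nat.div_add_mod n 2
    have h4 : (2:ℝ) * ((n/2:ℕ):ℝ) + ((n%2:ℕ):ℝ) = (n:ℝ) := by exact_mod_cast h3
    rw [div_eq_div_iff (by norm_num : (2:ℝ) ≠ 0) hn0, sub_mul, div_mul_cancel₀ _ hn0]
    linarith
  obtain ⟨hahalf, hchalf⟩ := hIC (fun n => n/2) (1/2) (by norm_num) hhalf hcastdiv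
  have hρ : Tendsto (fun n : ℕ => c n / α n) atTop (nhds 0) := by
    refine rho_tendsto_zero (fun n => c n / α n) (fun n => (c (n/2) - c n)/α n)
      (fun n => α (n/2)/α n) (fun n => n/2) ((1/2:ℝ) ^ ξ)
      (fun n hn => Nat.div_lt_self (by omega) one_lt_two) hhalf ?_ hahalf ?_ hchalf
    · intro n hn
      have h1 := (hα n).ne'
      have h2 := (hα (n/2)).ne'
      field_simp
      ring
    · rw [abs_of_pos (Real.rpow_pos_of_pos (by norm_num) ξ)]
      exact Real.rpow_lt_one (by norm_num) (by norm_num) hξ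
  have hVα : ∀ z : ℝ, 0 < z →
      Tendsto (fun n : ℕ => V ((n:ℝ)*z)/α n) atTop (nhds (z ^ ξ)) := by
    intro z hz
    have h1 := (hVseq z hz).add hρ
    rw [add_zero] at h1
    apply h1.congr
    intro n
    rw [← add_div, sub_add_cancel]
  have hsucc : Tendsto (fun n : ℕ => n + 1) atTop atTop := tendsto_add_atTop_nat 1
  have hcast1 : Tendsto (fun n : ℕ => (((n+1 : ℕ)) : ℝ)/(n:ℝ)) atTop (nhds 1) := by
    have h1 : Tendsto (fun n : ℕ => 1 + 1/(n:ℝ)) atTop (nhds (1+0)) :=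
      tendsto_const_nhds.add tendsto_one_div_atTop_nhds_zero_nat
    rw [add_zero] at h1
    apply h1.congr'
    filter_upwards [eventually_ge_atTop 1] with n hn
    have hn0 : ((n:ℝ)) ≠ 0 := Nat.cast_ne_zero.mpr (by omega)
    push_cast
    field_simp
  obtain ⟨hα1, -⟩ := hIC (fun n => n + 1) 1 one_pos hsucc hcast1
  rw [Real.one_rpow] at hα1
  -- continuous version
  have hVreal : ∀ z : ℝ, 0 < z →
      Tendsto (fun t : ℝ => V (t*z)/α (⌊t⌋₊)) atTop (nhds (z ^ ξ)) := by
    intro z hz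
    have hlow : Tendsto (fun t : ℝ => V ((⌊t⌋₊:ℝ)*z)/α ⌊t⌋₊) atTop (nhds (z^ξ)) :=
      (hVα z hz).comp tendsto_nat_floor_atTop
    have hupseq : Tendsto (fun n : ℕ => V (((n:ℝ)+1)*z)/α (n+1) * (α (n+1)/α n))
        atTop (nhds (z^ξ * 1)) := by
      refine Tendsto.mul ?_ hα1
      have h2 := (hVα z hz).comp hsucc
      apply h2.congr
      intro n
      simp only [Function.comp_apply]
      push_cast
      rfl
    rw [mul_one] at hupseq
    have hup : Tendsto (fun t : ℝ =>
        V (((⌊t⌋₊:ℝ)+1)*z)/α (⌊t⌋₊ + 1) * (α (⌊t⌋₊+1)/α ⌊t⌋₊)) atTop (nhds (z^ξ)) :=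
      hupseq.comp tendsto_nat_floor_atTop
    apply tendsto_of_tendsto_of_tendsto_of_le_of_le' hlow hup
    · filter_upwards [eventually_ge_atTop ((w0+1)/z + 1)] with t ht
      have hz1 : (w0+1)/z < (⌊t⌋₊:ℝ) := by
        have h3 : t - 1 < (⌊t⌋₊:ℝ) := Nat.sub_one_lt_floor t
        linarith
      have hgt : w0 < (⌊t⌋₊:ℝ) * z := by
        have h4 := (div_lt_iff₀ hz).mp hz1
        linarith
      have hle : (⌊t⌋₊:ℝ) * z ≤ t * z := by
        have h5 : (⌊t⌋₊:ℝ) ≤ t := Nat.floor_le (by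
          have hp : (0:ℝ) < (w0+1)/z + 1 := by
            have := hN1 0
            have hw01 : (0:ℝ) < w0 + 1 := by rw [hw0]; linarith
            positivity
          linarith)
        exact mul_le_mul_of_nonneg_right h5 hz.le
      exact (div_le_div_iff_of_pos_right (hα _)).mpr (hVmono _ _ hgt hle)
    · filter_upwards [eventually_ge_atTop ((w0+1)/z + 1)] with t ht
      have hp : (0:ℝ) < (w0+1)/z + 1 := by
        have := hN1 0
        have hw01 : (0:ℝ) < w0 + 1 := by rw [hw0]; linarith
        positivity
      have ht0 : 0 < t := lt_of_lt_of_le hp ht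
      have hgt : w0 < t * z := by
        have h4 := (div_le_iff₀ hz).mp (show (w0+1)/z ≤ t by linarith)
        linarith
      have hle : t * z ≤ ((⌊t⌋₊:ℝ)+1) * z := by
        have h5 : t ≤ (⌊t⌋₊:ℝ)+1 := (Nat.lt_floor_add_one t).le
        exact mul_le_mul_of_nonneg_right h5 hz.le
      have h6 : V (t*z) ≤ V (((⌊t⌋₊:ℝ)+1)*z) := hVmono _ _ hgt hle
      have heq : V (((⌊t⌋₊:ℝ)+1)*z)/α (⌊t⌋₊ + 1) * (α (⌊t⌋₊+1)/α ⌊t⌋₊)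
          = V (((⌊t⌋₊:ℝ)+1)*z)/α ⌊t⌋₊ := by
        have h7 := (hα (⌊t⌋₊+1)).ne'
        have h8 := (hα ⌊t⌋₊).ne'
        field_simp
      rw [heq]
      exact (div_le_div_iff_of_pos_right (hα _)).mpr h6
  -- final : continuous regular variation of N
  intro y hy
  have hyξ : 0 < y ^ (1/ξ) := Real.rpow_pos_of_pos hy _
  have hNt0 : ∀ t, 0 < N t := fun t => lt_of_lt_of_le one_pos (hN1 t)
  rw [tendsto_order]
  constructor
  · intro q hq
    rcases le_or_gt q 0 with hq0 | hq0
    · filter_upwards with t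
      have h1 := hNt0 (t*y)
      have h2 := hNt0 t
      have : 0 < N (t*y)/N t := by positivity
      linarith
    set z'' : ℝ := (q + y^(1/ξ))/2 with hz''def
    have hz''0 : 0 < z'' := by simp only [hz''def]; linarith
    have hz''q : q < z'' := by simp only [hz''def]; linarith
    have hz''lt : z'' < y^(1/ξ) := by simp only [hz''def]; linarith
    have hz''y : z'' ^ ξ < y := by
      have h1 := hmono3 z'' (y^(1/ξ)) hz''0.le hz''lt
      rwa [hcan2 y hy.le] at h1
    have hev1 : ∀ᶠ m : ℝ in atTop, V (m*z'') < y * V (m*1) := by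
      have h1 := hVreal z'' hz''0
      have h2 := (hVreal 1 one_pos).const_mul y
      rw [Real.one_rpow, mul_one] at h2
      have h3 := h1.eventually_lt h2 hz''y
      filter_upwards [h3] with m hm
      have h4 := hα ⌊m⌋₊
      calc V (m*z'') = (V (m*z'')/α ⌊m⌋₊) * α ⌊m⌋₊ := by field_simp
        _ < (y * (V (m*1)/α ⌊m⌋₊)) * α ⌊m⌋₊ := mul_lt_mul_of_pos_right hm h4
        _ = y * V (m*1) := by field_simp
    have hev2 := hNtop.eventually hev1
    filter_upwards [hev2, hNtop.eventually_gt_atTop w0] with t h1 h2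
    have hVwt : V (N t * 1) ≤ t := by
      rw [mul_one]
      exact hV4 _ _ h2 (le_refl _)
    have h3 : V (N t * z'') < t * y := by
      calc V (N t * z'') < y * V (N t * 1) := h1
        _ ≤ y * t := mul_le_mul_of_nonneg_left hVwt hy.le
        _ = t * y := mul_comm _ _
    have h4 : N t * z'' ≤ N (t * y) := hV7 _ _ h3
    calc q < z'' := hz''q
      _ ≤ N (t*y) / N t := by
          rw [le_div_iff₀ (hNt0 t)]
          linarith [h4]
  · intro q hq
    set z' : ℝ := (y^(1/ξ) + q)/2 with hz'def
    have hz'0 : 0 < z' := by simp only [hz'def]; linarith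
    have hz'gt : y^(1/ξ) < z' := by simp only [hz'def]; linarith
    have hz'lt : z' < q := by simp only [hz'def]; linarith
    set y' : ℝ := (y^(1/ξ) + z')/2 with hy'def
    have hy'0 : 0 < y' := by simp only [hy'def]; linarith
    have hy'gt : y^(1/ξ) < y' := by simp only [hy'def]; linarith
    have hy'lt : y' < z' := by simp only [hy'def]; linarith
    set r : ℝ := z'/y' with hrdef
    have hr1 : 1 < r := by
      rw [hrdef, lt_div_iff₀ hy'0]
      linarith
    have hr0 : 0 < r := by linarith
    have hry' : r * y' = z' := by
      rw [hrdef]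
      field_simp
    have hyy' : y < y' ^ ξ := by
      have h1 := hmono3 (y^(1/ξ)) y' (Real.rpow_nonneg hy.le _) hy'gt
      rwa [hcan2 y hy.le] at h1
    have hev1 : ∀ᶠ m : ℝ in atTop, y * V (m*1) < V (m*y') := by
      have h1 := (hVreal 1 one_pos).const_mul y
      rw [Real.one_rpow, mul_one] at h1
      have h2 := hVreal y' hy'0
      have h3 := h1.eventually_lt h2 hyy'
      filter_upwards [h3] with m hm
      have h4 := hα ⌊m⌋₊
      calc y * V (m*1) = (y * (V (m*1)/α ⌊m⌋₊)) * α ⌊m⌋₊ := by field_simp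
        _ < (V (m*y')/α ⌊m⌋₊) * α ⌊m⌋₊ := mul_lt_mul_of_pos_right hm h4
        _ = V (m*y') := by field_simp
    have hmul : Tendsto (fun t : ℝ => N t * r) atTop atTop := hNtop.atTop_mul_const hr0
    have hev2 := hmul.eventually hev1
    have hev3 : ∀ᶠ t : ℝ in atTop, w0 < N t * r * y' :=
      (hmul.atTop_mul_const hy'0).eventually_gt_atTop w0
    filter_upwards [hev2, hev3, hNtop.eventually_gt_atTop 0] with t h1 h2 h3
    have htle : t ≤ V (N t * r) := by
      exact hV5 _ _ ((lt_mul_iff_one_lt_right h3).mpr hr1)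
    have h5 : t * y ≤ y * V (N t * r * 1) := by
      rw [mul_one]
      calc t * y = y * t := mul_comm _ _
        _ ≤ y * V (N t * r) := mul_le_mul_of_nonneg_left htle hy.le
    have h6 : t * y < V (N t * r * y') := lt_of_le_of_lt h5 h1
    have h7 : N (t * y) < N t * r * y' := hV6 _ _ h2 h6
    have h8 : N t * r * y' = N t * z' := by rw [mul_assoc, hry']
    rw [h8] at h7
    calc N (t*y)/N t < z' := by
          have h9 : z' * N t = N t * z' := mul_comm _ _
          rw [div_lt_iff₀ (hNt0 t), h9]
          exact h7
      _ < q := hz'lt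

lemma L1_continuousAt (ξ : ℝ) (hξ : 0 < ξ) (x : ℝ) (hx : Real.exp (-1/ξ) < x) :
    ContinuousAt (L1 ξ 0 1) x := by
  have hx0 : 0 < x := lt_trans (Real.exp_pos _) hx
  have hcond : ∀ z : ℝ, Real.exp (-1/ξ) < z → 0 < 1 + ξ * Real.log z := by
    intro z hz
    have hz0 : 0 < z := lt_trans (Real.exp_pos _) hz
    have h1 : -1/ξ < Real.log z := (Real.lt_log_iff_exp_lt hz0).mpr hz
    have h2 : ξ * (-1/ξ) < ξ * Real.log z := mul_lt_mul_of_pos_left h1 hξ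
    have h3 : ξ * (-1/ξ) = -1 := by field_simp
    linarith
  have hg : ContinuousAt (fun z : ℝ => Real.exp (-(1 + ξ * Real.log z) ^ (-1/ξ))) x := by
    have h1 : ContinuousAt (fun z : ℝ => 1 + ξ * Real.log z) x :=
      continuousAt_const.add (continuousAt_const.mul (Real.continuousAt_log hx0.ne'))
    have h2 : ContinuousAt (fun z : ℝ => (1 + ξ * Real.log z) ^ (-1/ξ)) x :=
      h1.rpow_const (Or.inl (ne_of_gt (hcond x hx)))
    exact Real.continuous_exp.continuousAt.comp h2.neg
  apply hg.congr
  filter_upwards [isOpen_Ioi.mem_nhds hx] with z hz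
  rw [L1_eval ξ z (lt_trans (Real.exp_pos _) hz) (hcond z hz)]


lemma forward (ξ : ℝ) (hξ : 0 < ξ) (F : ℝ → ℝ) (hF : IsDF F)
    (hr : ¬ BddAbove {x : ℝ | F x < 1}) (hD : DpDomain F (L1 ξ 0 1)) :
    ∀ y : ℝ, 0 < y →
      Tendsto (fun t : ℝ => (1 - F (Real.exp (t * y))) / (1 - F (Real.exp t)))
        atTop (nhds (y ^ (-1/ξ))) := by
  obtain ⟨δ, β, hδ, hβ, hconv⟩ := hD
  set T : ℝ → ℝ := fun t => 1 - F (Real.exp t) with hTdef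
  have hTpos : ∀ t, 0 < T t := by
    intro t
    have := F_lt_one F hF.mono hr (Real.exp t)
    simp only [hTdef]
    linarith
  have hTanti : Antitone T := by
    intro s t hst
    have := hF.mono (Real.exp_le_exp.mpr hst)
    simp only [hTdef]
    linarith
  have hTle1 : ∀ t, T t ≤ 1 := by
    intro t
    have := F_nonneg F hF (Real.exp t)
    simp only [hTdef]
    linarith
  have hTtop : Tendsto T atTop (nhds 0) := by
    have h1 := hF.tendsto_top.comp Real.tendsto_exp_atTop
    have h2 := (tendsto_const_nhds (x := (1:ℝ)) (f := (atTop : Filter ℝ))).sub h1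
    simpa using h2
  set N : ℝ → ℝ := fun t => (T t)⁻¹ with hNdef
  have hN1 : ∀ t, 1 ≤ N t := by
    intro t
    have h1 := one_div_le_one_div_of_le (hTpos t) (hTle1 t)
    simpa [hNdef] using h1
  have hNmono : Monotone N := by
    intro s t hst
    have h1 := one_div_le_one_div_of_le (hTpos t) (hTanti hst)
    simpa [hNdef] using h1
  have hNtop : Tendsto N atTop atTop := by
    apply Filter.Tendsto.inv_tendsto_nhdsGT_zero
    exact tendsto_nhdsWithin_iff.mpr ⟨hTtop, Eventually.of_forall hTpos⟩
  set a : ℕ → ℝ := fun n => β n / ξ with hadef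
  set c : ℕ → ℝ := fun n => Real.log (δ n) - β n / ξ with hcdef
  have hapos : ∀ n, 0 < a n := fun n => div_pos (hβ n) hξ
  have hseqN : ∀ y : ℝ, 0 < y →
      Tendsto (fun n : ℕ => N (a n * y + c n) / n) atTop (nhds (y ^ (1/ξ))) := by
    intro y hy
    set x : ℝ := Real.exp ((y - 1)/ξ) with hxdef
    have hx0 : 0 < x := Real.exp_pos _
    have hlogx : Real.log x = (y-1)/ξ := Real.log_exp _
    have hyx : 1 + ξ * Real.log x = y := by rw [hlogx]; field_simp; ring
    have hxgt : Real.exp (-1/ξ) < x := by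
      apply Real.exp_lt_exp.mpr
      exact (div_lt_div_iff_of_pos_right hξ).mpr (by linarith)
    have hcont := L1_continuousAt ξ hξ x hxgt
    have h1 := hconv x hcont
    have harg : ∀ n, δ n * |x| ^ (β n) * Real.sign x = Real.exp (a n * y + c n) := by
      intro n
      rw [Real.sign_of_pos hx0, mul_one, abs_of_pos hx0, Real.rpow_def_of_pos hx0, hlogx]
      have hexp : a n * y + c n = Real.log (δ n) + (y-1)/ξ * β n := by
        simp only [hadef, hcdef]
        field_simp
        ring
      rw [hexp, Real.exp_add, Real.exp_log (hδ n)]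
    have hval : L1 ξ 0 1 x = Real.exp (-(y ^ (-1/ξ))) := by
      rw [L1_eval ξ x hx0 (by rw [hyx]; exact hy), hyx]
    rw [hval] at h1
    have h2 : Tendsto (fun n : ℕ => (F (Real.exp (a n * y + c n))) ^ n) atTop
        (nhds (Real.exp (-(y ^ (-1/ξ))))) := by
      apply h1.congr
      intro n
      rw [harg n]
    have hl0 : 0 < y ^ (-1/ξ) := Real.rpow_pos_of_pos hy _
    have h3 := tendsto_mul_of_tendsto_pow (fun n => F (Real.exp (a n * y + c n))) _ hl0
      (fun n => F_nonneg F hF _) (fun n => F_lt_one F hF.mono hr _) h2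
    have h4 : Tendsto (fun n : ℕ => ((n:ℝ) * T (a n * y + c n))⁻¹) atTop
        (nhds ((y ^ (-1/ξ))⁻¹)) := by
      apply Filter.Tendsto.inv₀ ?_ hl0.ne'
      exact h3
    have h5 : (y ^ (-1/ξ))⁻¹ = y ^ (1/ξ) := by
      rw [show (-1/ξ) = -(1/ξ) by ring, Real.rpow_neg hy.le, inv_inv]
    rw [h5] at h4
    apply h4.congr
    intro n
    rw [mul_inv, div_eq_mul_inv, mul_comm]
  have hNRV := rv_from_seq ξ hξ N hNmono hN1 hNtop a c hapos hseqN
  intro y hy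
  have hyξ : 0 < y ^ (1/ξ) := Real.rpow_pos_of_pos hy _
  have h1 := (hNRV y hy).inv₀ hyξ.ne'
  have h5 : (y ^ (1/ξ))⁻¹ = y ^ (-1/ξ) := by
    rw [show (-1/ξ) = -(1/ξ) by ring, Real.rpow_neg hy.le]
  rw [h5] at h1
  apply h1.congr
  intro t
  have h6 := (hTpos t).ne'
  have h7 := (hTpos (t*y)).ne'
  simp only [hNdef]
  show ((T (t*y))⁻¹ / (T t)⁻¹)⁻¹ = T (t*y) / T t
  rw [div_eq_mul_inv, inv_inv, mul_inv, inv_inv, ← div_eq_mul_inv]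



/-- For `ξ > 0` and a df `F` with `r(F) = ∞`, `F ∈ D_p(L_{1,ξ})`
(standardized, `μ = 0`, `σ = 1`) iff for every `x > 0` with `1 + ξ log x > 0`,
`F̄(x^{tξ} e^t)/F̄(e^t) → (1 + ξ log x)^{-1/ξ}` as `t → ∞`. -/
theorem stmt_1 (ξ : ℝ) (hξ : 0 < ξ) (F : ℝ → ℝ) (hF : IsDF F)
    (hr : ¬ BddAbove {x : ℝ | F x < 1}) :
    DpDomain F (L1 ξ 0 1) ↔
      ∀ x : ℝ, 0 < x → 0 < 1 + ξ * Real.log x →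
        Tendsto
          (fun t : ℝ => (1 - F (x ^ (t * ξ) * Real.exp t)) / (1 - F (Real.exp t)))
          atTop (nhds ((1 + ξ * Real.log x) ^ (-1 / ξ))) := by
  have hargeq : ∀ x : ℝ, 0 < x → ∀ t : ℝ, x ^ (t * ξ) * Real.exp t
      = Real.exp (t * (1 + ξ * Real.log x)) := by
    intro x hx t
    rw [Real.rpow_def_of_pos hx, ← Real.exp_add]
    congr 1
    ring
  constructor
  · intro hD x hx hy
    have h1 := forward ξ hξ F hF hr hD (1 + ξ * Real.log x) hy
    apply h1.congr
    intro t
    rw [hargeq x hx t]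
  · intro hRHS
    apply backward ξ F hξ hF hr
    intro y hy
    set x : ℝ := Real.exp ((y - 1)/ξ) with hxdef
    have hx0 : 0 < x := Real.exp_pos _
    have hyx : 1 + ξ * Real.log x = y := by rw [hxdef, Real.log_exp]; field_simp; ring
    have h1 := hRHS x hx0 (by rw [hyx]; exact hy)
    rw [hyx] at h1
    apply h1.congr
    intro t
    rw [hargeq x hx0 t, hyx]
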